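/- Let n, c, i, l, m be integers with 1 ≤ m ≤ c−1, n + c − m − 1 ≥ 0, max(0, n) ≤ l, max(1, n+1) ≤ i, and suppose additionally that l ≤ min(m, n + c − m − 2) and n + c ≥ 2m + 2 (so that both correction terms C₁ and C₂ vanish). Then Σ_{k=0}^{c-m-1} (-1)^k (c−k) C(c−m−1+i, k) C(c−m−2+i−k, i−(n+1)) C(l+c−m−1−k, l) equals 0 when i ≤ l, and equals (-1)^{n+c−m−1+l} (m+1−i) C(i−1, l) when l ≤ i − 1. -/

import Mathlib

/-- Integer binomial coefficient with the convention C(a,b) = 0 if b < 0 or b > a. -/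
def izC (a b : ℤ) : ℤ := if 0 ≤ b ∧ b ≤ a then (a.toNat).choose b.toNat else 0

/-- specialization of the finite-difference identity with vanishing
    boundary terms. -/

lemma izC_of_lt {a b : ℤ} (h : a < b) : izC a b = 0 := by
  unfold izC; rw [if_neg]; omega

lemma izC_of_neg {a b : ℤ} (h : b < 0) : izC a b = 0 := by
  unfold izC; rw [if_neg]; omega

lemma izC_eq_choose {a b : ℤ} (ha : 0 ≤ a) (hb : 0 ≤ b) :
    izC a b = ((a.toNat).choose b.toNat : ℤ) := by
  unfold izC
  by_cases h : b ≤ a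
  · rw [if_pos ⟨hb, h⟩]
  · rw [if_neg (by omega), Nat.choose_eq_zero_of_lt (by omega)]; simp

lemma izC_self {a : ℤ} (ha : 0 ≤ a) : izC a a = 1 := by
  rw [izC_eq_choose ha ha, Nat.choose_self]; simp

lemma izC_zero {a : ℤ} (ha : 0 ≤ a) : izC a 0 = 1 := by
  rw [izC_eq_choose ha le_rfl]; simp

lemma izC_pascal {a b : ℤ} (hb : 1 ≤ b) :
    izC a b = izC (a-1) b + izC (a-1) (b-1) := by
  by_cases ha : 1 ≤ a
  · rw [izC_eq_choose (by omega) (by omega), izC_eq_choose (by omega) (by omega),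
      izC_eq_choose (by omega) (by omega)]
    have h1 : a.toNat = (a-1).toNat + 1 := by omega
    have h2 : b.toNat = (b-1).toNat + 1 := by omega
    rw [h1, h2, Nat.choose_succ_succ']
    push_cast; ring
  · rw [izC_of_lt (by omega), izC_of_lt (by omega), izC_of_lt (by omega)]; ring

lemma izC_symm {a b : ℤ} (hb : 0 ≤ b) (hba : b ≤ a) : izC a b = izC a (a - b) := by
  rw [izC_eq_choose (by omega) hb, izC_eq_choose (by omega) (by omega)]
  have : (a-b).toNat = a.toNat - b.toNat := by omega
  rw [this, Nat.choose_symm (by omega)]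

-- chain: C(a,r)C(r,b) = C(a,b)C(a-b, r-b)
lemma izC_chain (a r b : ℤ) : izC a r * izC r b = izC a b * izC (a-b) (r-b) := by
  by_cases hb : 0 ≤ b
  · by_cases hr : b ≤ r
    · by_cases ha : r ≤ a
      · rw [izC_eq_choose (by omega) (by omega), izC_eq_choose (by omega) hb,
          izC_eq_choose (by omega) hb, izC_eq_choose (by omega) (by omega)]
        have h1 : (a-b).toNat = a.toNat - b.toNat := by omega
        have h2 : (r-b).toNat = r.toNat - b.toNat := by omega
        rw [h1, h2, ← Nat.cast_mul, ← Nat.cast_mul,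
          Nat.choose_mul (n := a.toNat) (k := r.toNat) (s := b.toNat) (by omega)]
      · rw [izC_of_lt (by omega), izC_of_lt (show a - b < r - b by omega)]; ring
    · have h1 : izC r b = 0 := izC_of_lt (by omega)
      have h2 : izC (a-b) (r-b) = 0 := izC_of_neg (by omega)
      rw [h1, h2]; ring
  · have h1 : izC r b = 0 := izC_of_neg (by omega)
    have h2 : izC a b = 0 := izC_of_neg (by omega)
    rw [h1, h2]; ring

-- swap: C(N,k)C(N-k,d) = C(N,d)C(N-d,k)
lemma izC_swap (N k d : ℤ) : izC N k * izC (N-k) d = izC N d * izC (N-d) k := by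
  have key : ∀ x y : ℤ, 0 ≤ x → 0 ≤ y → x + y ≤ N →
      izC N x * izC (N-x) y = izC N (x+y) * izC (x+y) x := by
    intro x y hx hy hxy
    rw [izC_eq_choose (by omega) hx, izC_eq_choose (by omega) hy,
      izC_eq_choose (by omega) (by omega), izC_eq_choose (by omega) hx]
    have h1 : (N-x).toNat = N.toNat - x.toNat := by omega
    have h2 : (x+y).toNat = x.toNat + y.toNat := by omega
    rw [h1, h2, ← Nat.cast_mul, ← Nat.cast_mul]
    congr 1
    have h3 := Nat.choose_mul (n := N.toNat) (k := x.toNat + y.toNat) (s := x.toNat)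
      (show x.toNat ≤ x.toNat + y.toNat by omega)
    have hsub : x.toNat + y.toNat - x.toNat = y.toNat := by omega
    rw [hsub] at h3
    omega
  by_cases hk : 0 ≤ k
  · by_cases hd : 0 ≤ d
    · by_cases hkd : k + d ≤ N
      · rw [key k d hk hd hkd, key d k hd hk (by omega)]
        rw [add_comm d k]
        congr 1
        rw [izC_eq_choose (by omega) hk, izC_eq_choose (by omega) hd]
        have : d.toNat = (k+d).toNat - k.toNat := by omega
        rw [this, Nat.choose_symm (by omega)]
      · -- k + d > N : both sides 0
        by_cases hkN : k ≤ N
        · rw [izC_of_lt (show N - k < d by omega)]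
          by_cases hdN : d ≤ N
          · rw [izC_of_lt (show N - d < k by omega)]; ring
          · rw [izC_of_lt (show N < d by omega)]; ring
        · rw [izC_of_lt (show N < k by omega)]
          by_cases hdN : d ≤ N
          · rw [izC_of_lt (show N - d < k by omega)]; ring
          · rw [izC_of_lt (show N < d by omega)]; ring
    · rw [izC_of_neg (show d < 0 by omega), izC_of_neg (show d < 0 by omega)]; ring
  · rw [izC_of_neg (show k < 0 by omega), izC_of_neg (show k < 0 by omega)]; ring

-- absorb: (N-k) C(N,k) = N C(N-1,k)
lemma izC_absorb {N k : ℤ} (hN : 1 ≤ N) : (N - k) * izC N k = N * izC (N-1) k := by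
  by_cases hk : 0 ≤ k
  · rw [izC_eq_choose (by omega) hk, izC_eq_choose (by omega) hk]
    by_cases hkN : k ≤ N
    · have h0 : N.toNat = (N-1).toNat + 1 := by omega
      have := Nat.choose_mul_succ_eq ((N-1).toNat) (k.toNat)
      -- (N-1).choose k * N = N.choose k * (N - k)   (nat sub)
      have hcast : ((N-1).toNat.choose k.toNat * N.toNat : ℤ)
          = (N.toNat.choose k.toNat : ℤ) * ((N.toNat - k.toNat : ℕ) : ℤ) := by
        rw [h0]; exact_mod_cast congrArg (Nat.cast (R := ℤ)) this
      have h2 : ((N.toNat - k.toNat : ℕ) : ℤ) = N - k := by omega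
      rw [h2] at hcast
      have h3 : ((N.toNat : ℤ)) = N := by omega
      nlinarith [hcast]
    · rw [Nat.choose_eq_zero_of_lt (by omega), Nat.choose_eq_zero_of_lt (by omega)]
      simp
  · rw [izC_of_neg (by omega), izC_of_neg (by omega)]; ring

-- Gm M P Q = ∑_{k=0}^{M} (-1)^k C(M,k) C(P-k,Q)
def Gm (M : ℕ) (P Q : ℤ) : ℤ :=
  ∑ k ∈ Finset.range (M+1), (-1:ℤ)^k * izC (M:ℤ) (k:ℤ) * izC (P - k) Q

-- partial alternating row sums
lemma Hp (M : ℕ) (hM : 1 ≤ M) (j : ℕ) :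
    ∑ s ∈ Finset.range (j+1), (-1:ℤ)^s * izC (M:ℤ) (s:ℤ)
      = (-1:ℤ)^j * izC ((M:ℤ)-1) (j:ℤ) := by
  induction j with
  | zero => simp [izC_zero (show (0:ℤ) ≤ (M:ℤ)-1 by omega), izC_zero (show (0:ℤ) ≤ (M:ℤ) by omega)]
  | succ j ih =>
    rw [Finset.sum_range_succ, ih]
    have hp : izC ((M:ℤ)) ((j:ℤ)+1) = izC ((M:ℤ)-1) ((j:ℤ)+1) + izC ((M:ℤ)-1) ((j:ℤ)) := by
      have := izC_pascal (a := (M:ℤ)) (b := (j:ℤ)+1) (by omega)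
      simpa using this
    push_cast
    rw [hp]
    ring

lemma Gm_zeroQ (M : ℕ) (hM : 1 ≤ M) (P : ℤ) :
    Gm M P 0 = (-1:ℤ)^(P.toNat) * izC ((M:ℤ)-1) P := by
  by_cases hP : 0 ≤ P
  · have hz : ∀ k : ℕ, (k:ℤ) ≤ P → izC (P - k) 0 = 1 := fun k hk => izC_zero (by omega)
    have hz' : ∀ k : ℕ, P < (k:ℤ) → izC (P - k) 0 = 0 := fun k hk => izC_of_lt (by omega)
    by_cases hPM : (M:ℤ) ≤ P
    · -- all terms have the 0-binomial equal 1
      have : Gm M P 0 = ∑ k ∈ Finset.range (M+1), (-1:ℤ)^k * izC (M:ℤ) (k:ℤ) := by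
        unfold Gm
        apply Finset.sum_congr rfl
        intro k hk
        rw [hz k (by simp only [Finset.mem_range] at hk; omega), mul_one]
      rw [this, Hp M hM M, izC_of_lt (show (M:ℤ)-1 < (M:ℤ) by omega)]
      rw [izC_of_lt (show (M:ℤ)-1 < P by omega)]
      ring
    · -- P.toNat < M
      have hPn : P.toNat < M := by omega
      have : Gm M P 0 = ∑ k ∈ Finset.range (P.toNat+1), (-1:ℤ)^k * izC (M:ℤ) (k:ℤ) := by
        unfold Gm
        rw [← Finset.sum_subset (show Finset.range (P.toNat+1) ⊆ Finset.range (M+1) from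
            Finset.range_subset_range.2 (by omega))]
        · apply Finset.sum_congr rfl
          intro k hk
          rw [hz k (by simp only [Finset.mem_range] at hk; omega), mul_one]
        · intro k hk hk2
          have : P < (k:ℤ) := by
            simp only [Finset.mem_range] at hk2
            omega
          rw [hz' k this]
          ring
      rw [this, Hp M hM P.toNat]
      congr 2
      omega
  · -- P < 0 : everything vanishes
    have : Gm M P 0 = 0 := by
      unfold Gm
      apply Finset.sum_eq_zero
      intro k _
      rw [izC_of_lt (show P - (k:ℤ) < 0 by omega)]
      ring
    rw [this, izC_of_neg (show P < 0 by omega)]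
    ring

lemma Gm_rec (M : ℕ) (hM : 1 ≤ M) (P Q : ℤ) (hQ : 1 ≤ Q) :
    Gm M P Q = Gm (M-1) (P-1) (Q-1) := by
  obtain ⟨M', rfl⟩ : ∃ M', M = M' + 1 := ⟨M - 1, by omega⟩
  unfold Gm
  simp only [Nat.add_sub_cancel]
  have hsplit : ∀ k ∈ Finset.range (M'+1+1),
      (-1:ℤ)^k * izC ((M':ℤ)+1) (k:ℤ) * izC (P - k) Q
      = (-1:ℤ)^k * izC ((M':ℤ)) (k:ℤ) * izC (P - k) Q
        + (-1:ℤ)^k * izC ((M':ℤ)) ((k:ℤ)-1) * izC (P - k) Q := by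
    intro k _
    have : izC ((M':ℤ)+1) (k:ℤ) = izC ((M':ℤ)) (k:ℤ) + izC ((M':ℤ)) ((k:ℤ)-1) := by
      by_cases hk : 1 ≤ k
      · have := izC_pascal (a := (M':ℤ)+1) (b := (k:ℤ)) (by omega)
        simpa using this
      · have hk0 : (k:ℤ) = 0 := by omega
        rw [hk0, izC_zero (show (0:ℤ) ≤ (M':ℤ)+1 by omega),
          izC_zero (show (0:ℤ) ≤ (M':ℤ) by omega),
          izC_of_neg (show (0:ℤ)-1 < 0 by norm_num)]
        ring
    rw [this]; ring
  simp only [Nat.cast_add, Nat.cast_one]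
  rw [Finset.sum_congr rfl hsplit, Finset.sum_add_distrib]
  -- first sum: k = M'+1 term vanishes
  have h1 : ∑ k ∈ Finset.range (M'+1+1), (-1:ℤ)^k * izC ((M':ℤ)) (k:ℤ) * izC (P - k) Q
      = ∑ k ∈ Finset.range (M'+1), (-1:ℤ)^k * izC ((M':ℤ)) (k:ℤ) * izC (P - k) Q := by
    rw [Finset.sum_range_succ, izC_of_lt (show (M':ℤ) < ((M'+1:ℕ):ℤ) by push_cast; omega)]
    simp
  -- second sum: shift index
  have h2 : ∑ k ∈ Finset.range (M'+1+1), (-1:ℤ)^k * izC ((M':ℤ)) ((k:ℤ)-1) * izC (P - k) Q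
      = - ∑ s ∈ Finset.range (M'+1), (-1:ℤ)^s * izC ((M':ℤ)) (s:ℤ) * izC (P - 1 - s) Q := by
    rw [Finset.sum_range_succ']
    have h0 : (-1:ℤ)^0 * izC ((M':ℤ)) (((0:ℕ):ℤ)-1) * izC (P - (0:ℕ)) Q = 0 := by
      have : izC ((M':ℤ)) (((0:ℕ):ℤ)-1) = 0 := izC_of_neg (by norm_num)
      rw [this]; ring
    rw [h0, add_zero, ← Finset.sum_neg_distrib]
    apply Finset.sum_congr rfl
    intro s _
    push_cast
    have : ((s:ℤ)+1) - 1 = (s:ℤ) := by ring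
    rw [this]
    have : P - ((s:ℤ)+1) = P - 1 - s := by ring
    rw [this]
    ring
  rw [h1, h2, ← sub_eq_add_neg, ← Finset.sum_sub_distrib]
  apply Finset.sum_congr rfl
  intro k _
  have hp : izC (P - k) Q = izC (P - k - 1) Q + izC (P - k - 1) (Q - 1) := izC_pascal hQ
  have he : P - (k:ℤ) - 1 = P - 1 - k := by ring
  rw [hp, he]
  ring

lemma Gm_Ia (M : ℕ) (P Q : ℤ) (h : (M:ℤ) ≤ Q) :
    Gm M P Q = izC (P - M) (Q - M) := by
  induction M generalizing P Q with
  | zero =>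
    unfold Gm
    simp only [Finset.sum_range_one, Nat.cast_zero, Nat.cast_ofNat, pow_zero, one_mul, sub_zero,
      zero_add, Nat.zero_add]
    rw [izC_self le_rfl, one_mul]
  | succ M ih =>
    rw [Gm_rec (M+1) (by omega) P Q (by push_cast at h ⊢; omega)]
    simp only [Nat.add_sub_cancel]
    rw [ih (P-1) (Q-1) (by push_cast at h ⊢; omega)]
    congr 1 <;> push_cast <;> ring

lemma Gm_Ib (M : ℕ) (P Q : ℤ) (hQ0 : 0 ≤ Q) (hQ : Q < (M:ℤ)) :
    Gm M P Q = (-1:ℤ)^((P-Q).toNat) * izC ((M:ℤ) - Q - 1) (P - Q) := by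
  obtain ⟨q, rfl⟩ : ∃ q : ℕ, Q = (q:ℤ) := ⟨Q.toNat, by omega⟩
  induction q generalizing M P with
  | zero =>
    push_cast
    rw [Gm_zeroQ M (by omega) P]
    simp
  | succ q ih =>
    have hone : ((q+1:ℕ):ℤ) = (q:ℤ) + 1 := by push_cast; ring
    rw [hone] at hQ0 hQ ⊢
    rw [Gm_rec M (by omega) P ((q:ℤ)+1) (by omega)]
    have h1 : (q:ℤ) + 1 - 1 = (q:ℤ) := by ring
    rw [h1]
    rw [ih (M-1) (P-1) (by omega) (by push_cast; omega)]
    have hc : ((M-1:ℕ):ℤ) = (M:ℤ) - 1 := by omega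
    rw [hc]
    have e1 : P - 1 - (q:ℤ) = P - ((q:ℤ)+1) := by ring
    have e2 : (M:ℤ) - 1 - (q:ℤ) - 1 = (M:ℤ) - ((q:ℤ)+1) - 1 := by ring
    rw [e1, e2]

lemma alt_row (e : ℕ) :
    ∑ s ∈ Finset.range (e+1), (-1:ℤ)^s * izC (e:ℤ) (s:ℤ) = if e = 0 then 1 else 0 := by
  by_cases he : e = 0
  · subst he; simp [izC_zero (le_refl (0:ℤ))]
  · rw [if_neg he, Hp e (by omega) e, izC_of_lt (show (e:ℤ)-1 < (e:ℤ) by omega)]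
    ring

lemma orth (M a b : ℕ) (ha : a ≤ M) :
    ∑ r ∈ Finset.range (M+1), (-1:ℤ)^r * izC (a:ℤ) (r:ℤ) * izC (r:ℤ) (b:ℤ)
      = if a = b then (-1:ℤ)^a else 0 := by
  have hchain : ∀ r : ℕ, izC (a:ℤ) (r:ℤ) * izC (r:ℤ) (b:ℤ)
      = izC (a:ℤ) (b:ℤ) * izC ((a:ℤ)-(b:ℤ)) ((r:ℤ)-(b:ℤ)) := fun r => izC_chain _ _ _
  by_cases hba : b ≤ a
  · -- main case
    have hcast : ((a:ℤ) - (b:ℤ)) = ((a-b : ℕ) : ℤ) := by omega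
    have key : ∑ r ∈ Finset.range (M+1), (-1:ℤ)^r * izC ((a:ℤ)-(b:ℤ)) ((r:ℤ)-(b:ℤ))
        = (-1:ℤ)^b * (if a - b = 0 then 1 else 0) := by
      -- restrict to [b, a]
      have h1 : ∑ r ∈ Finset.range (M+1), (-1:ℤ)^r * izC ((a:ℤ)-(b:ℤ)) ((r:ℤ)-(b:ℤ))
          = ∑ r ∈ Finset.range (a+1), (-1:ℤ)^r * izC ((a:ℤ)-(b:ℤ)) ((r:ℤ)-(b:ℤ)) := by
        rw [← Finset.sum_subset (show Finset.range (a+1) ⊆ Finset.range (M+1) from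
              Finset.range_subset_range.2 (by omega))]
        intro r hr hr2
        simp only [Finset.mem_range] at hr hr2
        rw [izC_of_lt (show (a:ℤ)-(b:ℤ) < (r:ℤ)-(b:ℤ) by omega)]
        ring
      rw [h1]
      have h2 : ∑ r ∈ Finset.range (a+1), (-1:ℤ)^r * izC ((a:ℤ)-(b:ℤ)) ((r:ℤ)-(b:ℤ))
          = ∑ r ∈ Finset.Ico b (a+1), (-1:ℤ)^r * izC ((a:ℤ)-(b:ℤ)) ((r:ℤ)-(b:ℤ)) := by
        rw [Finset.range_eq_Ico, ← Finset.sum_Ico_consecutive _ (show 0 ≤ b by omega) (by omega)]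
        have : ∑ r ∈ Finset.Ico 0 b, (-1:ℤ)^r * izC ((a:ℤ)-(b:ℤ)) ((r:ℤ)-(b:ℤ)) = 0 := by
          apply Finset.sum_eq_zero
          intro r hr
          simp only [Finset.mem_Ico] at hr
          rw [izC_of_neg (show (r:ℤ)-(b:ℤ) < 0 by omega)]
          ring
        rw [this, zero_add]
      rw [h2, Finset.sum_Ico_eq_sum_range]
      have h3 : ∀ s ∈ Finset.range (a+1-b), (-1:ℤ)^(b+s) * izC ((a:ℤ)-(b:ℤ)) ((↑(b+s):ℤ)-(b:ℤ))
          = (-1:ℤ)^b * ((-1)^s * izC ((a-b:ℕ):ℤ) (s:ℤ)) := by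
        intro s _
        rw [hcast]
        have : ((↑(b+s):ℤ)-(b:ℤ)) = (s:ℤ) := by push_cast; ring
        rw [this, pow_add]
        ring
      rw [Finset.sum_congr rfl h3, ← Finset.mul_sum]
      have h4 : a + 1 - b = (a-b) + 1 := by omega
      rw [h4, alt_row (a-b)]
    calc ∑ r ∈ Finset.range (M+1), (-1:ℤ)^r * izC (a:ℤ) (r:ℤ) * izC (r:ℤ) (b:ℤ)
        = izC (a:ℤ) (b:ℤ) * ∑ r ∈ Finset.range (M+1),
            (-1:ℤ)^r * izC ((a:ℤ)-(b:ℤ)) ((r:ℤ)-(b:ℤ)) := by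
          rw [Finset.mul_sum]
          apply Finset.sum_congr rfl
          intro r _
          rw [mul_assoc, hchain r]; ring
      _ = izC (a:ℤ) (b:ℤ) * ((-1:ℤ)^b * (if a - b = 0 then 1 else 0)) := by rw [key]
      _ = if a = b then (-1:ℤ)^a else 0 := by
          by_cases hab : a = b
          · subst hab
            rw [if_pos rfl, if_pos (by omega), izC_self (by positivity)]
            ring
          · rw [if_neg (by omega), if_neg hab]
            ring
  · -- b > a : izC a b = 0
    have hz : izC (a:ℤ) (b:ℤ) = 0 := izC_of_lt (by omega)
    have : ∀ r ∈ Finset.range (M+1), (-1:ℤ)^r * izC (a:ℤ) (r:ℤ) * izC (r:ℤ) (b:ℤ) = 0 := by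
      intro r _
      rw [mul_assoc, hchain r, hz]
      ring
    rw [Finset.sum_congr rfl this, Finset.sum_const, if_neg (by omega)]
    simp

lemma decouple (M : ℕ) (A B : ℕ → ℤ) :
    ∑ k ∈ Finset.range (M+1), (-1:ℤ)^k * izC (M:ℤ) (k:ℤ) * A k * B k
    = ∑ r ∈ Finset.range (M+1), izC (M:ℤ) (r:ℤ) *
        (∑ a ∈ Finset.range (M+1), (-1:ℤ)^(a-r) * izC ((M:ℤ)-(r:ℤ)) ((a:ℤ)-(r:ℤ)) * A a) *
        (∑ b ∈ Finset.range (M+1), (-1:ℤ)^b * izC (r:ℤ) (b:ℤ) * B b) := by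
  -- expand RHS into a triple sum and swap
  have expand : ∀ r ∈ Finset.range (M+1), izC (M:ℤ) (r:ℤ) *
        (∑ a ∈ Finset.range (M+1), (-1:ℤ)^(a-r) * izC ((M:ℤ)-(r:ℤ)) ((a:ℤ)-(r:ℤ)) * A a) *
        (∑ b ∈ Finset.range (M+1), (-1:ℤ)^b * izC (r:ℤ) (b:ℤ) * B b)
      = ∑ a ∈ Finset.range (M+1), ∑ b ∈ Finset.range (M+1),
          (izC (M:ℤ) (r:ℤ) * ((-1:ℤ)^(a-r) * izC ((M:ℤ)-(r:ℤ)) ((a:ℤ)-(r:ℤ)))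
            * ((-1:ℤ)^b * izC (r:ℤ) (b:ℤ))) * (A a * B b) := by
    intro r _
    rw [mul_assoc, Finset.sum_mul_sum, Finset.mul_sum]
    apply Finset.sum_congr rfl
    intro a _
    rw [Finset.mul_sum]
    apply Finset.sum_congr rfl
    intro b _
    ring
  have swap2 : ∀ a ∈ Finset.range (M+1),
      ∑ r ∈ Finset.range (M+1), ∑ b ∈ Finset.range (M+1),
          (izC (M:ℤ) (r:ℤ) * ((-1:ℤ)^(a-r) * izC ((M:ℤ)-(r:ℤ)) ((a:ℤ)-(r:ℤ)))
            * ((-1:ℤ)^b * izC (r:ℤ) (b:ℤ))) * (A a * B b)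
      = ∑ b ∈ Finset.range (M+1), (∑ r ∈ Finset.range (M+1),
          izC (M:ℤ) (r:ℤ) * ((-1:ℤ)^(a-r) * izC ((M:ℤ)-(r:ℤ)) ((a:ℤ)-(r:ℤ)))
            * ((-1:ℤ)^b * izC (r:ℤ) (b:ℤ))) * (A a * B b) := by
    intro a _
    rw [Finset.sum_comm]
    apply Finset.sum_congr rfl
    intro b _
    rw [Finset.sum_mul]
  -- now evaluate the inner r-sum via the delta identity
  have delta : ∀ a ∈ Finset.range (M+1), ∀ b ∈ Finset.range (M+1),
      (∑ r ∈ Finset.range (M+1),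
          izC (M:ℤ) (r:ℤ) * ((-1:ℤ)^(a-r) * izC ((M:ℤ)-(r:ℤ)) ((a:ℤ)-(r:ℤ)))
            * ((-1:ℤ)^b * izC (r:ℤ) (b:ℤ)))
      = if a = b then (-1:ℤ)^a * izC (M:ℤ) (a:ℤ) else 0 := by
    intro a ha b hb
    simp only [Finset.mem_range] at ha hb
    have hterm : ∀ r ∈ Finset.range (M+1),
        izC (M:ℤ) (r:ℤ) * ((-1:ℤ)^(a-r) * izC ((M:ℤ)-(r:ℤ)) ((a:ℤ)-(r:ℤ)))
            * ((-1:ℤ)^b * izC (r:ℤ) (b:ℤ))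
        = ((-1:ℤ)^a * izC (M:ℤ) (a:ℤ)) * ((-1:ℤ)^b *
            ((-1:ℤ)^r * izC (a:ℤ) (r:ℤ) * izC (r:ℤ) (b:ℤ))) := by
      intro r _
      by_cases hra : r ≤ a
      · have hsign : (-1:ℤ)^(a-r) = (-1:ℤ)^a * (-1:ℤ)^r := by
          have : (-1:ℤ)^a = (-1:ℤ)^(a-r) * (-1:ℤ)^r := by
            rw [← pow_add]
            congr 1
            omega
          have h2 : ((-1:ℤ)^r)*((-1:ℤ)^r) = 1 := by
            rw [← pow_add, Even.neg_one_pow ⟨r, rfl⟩]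
          calc (-1:ℤ)^(a-r) = (-1:ℤ)^(a-r) * (((-1:ℤ)^r)*((-1:ℤ)^r)) := by rw [h2]; ring
            _ = (-1:ℤ)^a * (-1:ℤ)^r := by rw [this]; ring
        have hch := izC_chain (M:ℤ) (a:ℤ) (r:ℤ)
        -- izC M a * izC a r = izC M r * izC (M - r) (a - r)
        rw [hsign]
        linear_combination (-((-1:ℤ)^a * (-1:ℤ)^r * (-1:ℤ)^b * izC (r:ℤ) (b:ℤ))) * hch
      · have h1 : izC ((M:ℤ)-(r:ℤ)) ((a:ℤ)-(r:ℤ)) = 0 := izC_of_neg (by omega)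
        have h2 : izC (a:ℤ) (r:ℤ) = 0 := izC_of_lt (by omega)
        rw [h1, h2]
        ring
    rw [Finset.sum_congr rfl hterm, ← Finset.mul_sum]
    have : ∑ r ∈ Finset.range (M+1), (-1:ℤ)^b *
            ((-1:ℤ)^r * izC (a:ℤ) (r:ℤ) * izC (r:ℤ) (b:ℤ))
        = (-1:ℤ)^b * ∑ r ∈ Finset.range (M+1),
            (-1:ℤ)^r * izC (a:ℤ) (r:ℤ) * izC (r:ℤ) (b:ℤ) := by
      rw [Finset.mul_sum]
    rw [this, orth M a b (by omega)]
    by_cases hab : a = b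
    · subst hab
      rw [if_pos rfl, if_pos rfl]
      have h2 : ((-1:ℤ)^a)*((-1:ℤ)^a) = 1 := by
        rw [← pow_add, Even.neg_one_pow ⟨a, rfl⟩]
      linear_combination ((-1:ℤ)^a * izC (M:ℤ) (a:ℤ)) * h2
    · rw [if_neg hab, if_neg hab]
      ring
  have collapse : ∀ a ∈ Finset.range (M+1),
      ∑ b ∈ Finset.range (M+1),
        (if a = b then (-1:ℤ)^a * izC (M:ℤ) (a:ℤ) else 0) * (A a * B b)
      = (-1:ℤ)^a * izC (M:ℤ) (a:ℤ) * A a * B a := by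
    intro a ha
    rw [Finset.sum_eq_single a]
    · rw [if_pos rfl]; ring
    · intro b _ hba
      rw [if_neg (fun h => hba h.symm)]
      ring
    · intro h; exact absurd ha h
  calc ∑ k ∈ Finset.range (M+1), (-1:ℤ)^k * izC (M:ℤ) (k:ℤ) * A k * B k
      = ∑ a ∈ Finset.range (M+1), ∑ b ∈ Finset.range (M+1),
          (if a = b then (-1:ℤ)^a * izC (M:ℤ) (a:ℤ) else 0) * (A a * B b) :=
        (Finset.sum_congr rfl collapse).symm
    _ = ∑ a ∈ Finset.range (M+1), ∑ b ∈ Finset.range (M+1),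
          (∑ r ∈ Finset.range (M+1),
            izC (M:ℤ) (r:ℤ) * ((-1:ℤ)^(a-r) * izC ((M:ℤ)-(r:ℤ)) ((a:ℤ)-(r:ℤ)))
              * ((-1:ℤ)^b * izC (r:ℤ) (b:ℤ))) * (A a * B b) := by
        apply Finset.sum_congr rfl
        intro a ha
        apply Finset.sum_congr rfl
        intro b hb
        rw [delta a ha b hb]
    _ = ∑ a ∈ Finset.range (M+1), ∑ r ∈ Finset.range (M+1), ∑ b ∈ Finset.range (M+1),
          (izC (M:ℤ) (r:ℤ) * ((-1:ℤ)^(a-r) * izC ((M:ℤ)-(r:ℤ)) ((a:ℤ)-(r:ℤ)))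
            * ((-1:ℤ)^b * izC (r:ℤ) (b:ℤ))) * (A a * B b) :=
        (Finset.sum_congr rfl swap2).symm
    _ = ∑ r ∈ Finset.range (M+1), ∑ a ∈ Finset.range (M+1), ∑ b ∈ Finset.range (M+1),
          (izC (M:ℤ) (r:ℤ) * ((-1:ℤ)^(a-r) * izC ((M:ℤ)-(r:ℤ)) ((a:ℤ)-(r:ℤ)))
            * ((-1:ℤ)^b * izC (r:ℤ) (b:ℤ))) * (A a * B b) := Finset.sum_comm
    _ = _ := (Finset.sum_congr rfl expand).symm

-- reindexing: shifted inner sum equals Gm-style sum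
lemma shift_sum (M r : ℕ) (hr : r ≤ M) (g : ℕ → ℤ) :
    ∑ a ∈ Finset.range (M+1), (-1:ℤ)^(a-r) * izC ((M:ℤ)-(r:ℤ)) ((a:ℤ)-(r:ℤ)) * g a
    = ∑ s ∈ Finset.range (M-r+1), (-1:ℤ)^s * izC ((M:ℤ)-(r:ℤ)) (s:ℤ) * g (r+s) := by
  rw [Finset.range_eq_Ico, ← Finset.sum_Ico_consecutive _ (show 0 ≤ r by omega) (by omega)]
  have h0 : ∑ a ∈ Finset.Ico 0 r, (-1:ℤ)^(a-r) * izC ((M:ℤ)-(r:ℤ)) ((a:ℤ)-(r:ℤ)) * g a = 0 := by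
    apply Finset.sum_eq_zero
    intro a ha
    simp only [Finset.mem_Ico] at ha
    rw [izC_of_neg (show (a:ℤ)-(r:ℤ) < 0 by omega)]
    ring
  rw [h0, zero_add, Finset.sum_Ico_eq_sum_range]
  have : M + 1 - r = M - r + 1 := by omega
  rw [this]
  apply Finset.sum_congr rfl
  intro s _
  have e1 : r + s - r = s := by omega
  have e2 : ((↑(r+s):ℤ)-(r:ℤ)) = (s:ℤ) := by push_cast; ring
  rw [e1, e2]

lemma shrink_sum (M r : ℕ) (hr : r ≤ M) (g : ℕ → ℤ) :
    ∑ b ∈ Finset.range (M+1), (-1:ℤ)^b * izC (r:ℤ) (b:ℤ) * g b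
    = ∑ b ∈ Finset.range (r+1), (-1:ℤ)^b * izC (r:ℤ) (b:ℤ) * g b := by
  rw [← Finset.sum_subset (show Finset.range (r+1) ⊆ Finset.range (M+1) from
        Finset.range_subset_range.2 (by omega))]
  intro b hb hb2
  simp only [Finset.mem_range] at hb hb2
  rw [izC_of_lt (show (r:ℤ) < (b:ℤ) by omega)]
  ring

lemma negpow_congr {x y : ℕ} (h : x % 2 = y % 2) : (-1:ℤ)^x = (-1)^y := by
  rcases Nat.even_or_odd x with hx | hx
  · have hy : Even y := Nat.even_iff.2 (by have := Nat.even_iff.1 hx; omega)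
    rw [hx.neg_one_pow, hy.neg_one_pow]
  · have hy : Odd y := Nat.odd_iff.2 (by have := Nat.odd_iff.1 hx; omega)
    rw [hx.neg_one_pow, hy.neg_one_pow]

lemma negpow_sub {x r : ℕ} (h : r ≤ x) : (-1:ℤ)^(x-r) = (-1)^x * (-1)^r := by
  have h1 : (-1:ℤ)^(x-r) * (-1)^r = (-1)^x := by
    rw [← pow_add]; congr 1; omega
  have h2 : ((-1:ℤ)^r)*((-1:ℤ)^r) = 1 := by
    rw [← pow_add]; exact Even.neg_one_pow ⟨r, rfl⟩
  linear_combination ((-1:ℤ)^r) * h1 - ((-1:ℤ)^(x-r)) * h2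

lemma Gm0 (P Q : ℤ) : Gm 0 P Q = izC P Q := by
  unfold Gm
  simp only [Finset.sum_range_one, Nat.cast_zero, Nat.cast_ofNat, pow_zero, one_mul, sub_zero,
    zero_add, Nat.zero_add]
  rw [izC_self le_rfl, one_mul]

lemma sum_Icc_toRange (X : ℤ) (hX : 0 ≤ X) (f : ℤ → ℤ) :
    ∑ k ∈ Finset.Icc (0:ℤ) X, f k = ∑ k ∈ Finset.range (X.toNat+1), f (k:ℤ) := by
  have hset : Finset.Icc (0:ℤ) X
      = Finset.map ⟨(Nat.cast : ℕ → ℤ), Nat.cast_injective⟩ (Finset.range (X.toNat+1)) := by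
    ext x
    simp only [Finset.mem_Icc, Finset.mem_map, Finset.mem_range, Function.Embedding.coeFn_mk]
    constructor
    · rintro ⟨h1, h2⟩; exact ⟨x.toNat, by omega, by omega⟩
    · rintro ⟨a, ha, rfl⟩; constructor <;> omega
  rw [hset, Finset.sum_map]
  rfl

theorem stmt_8 (n c i l m : ℤ)
    (hm1 : 1 ≤ m) (hmc : m ≤ c - 1) (hn : 0 ≤ n + c - m - 1)
    (hl : max 0 n ≤ l) (hi : max 1 (n + 1) ≤ i)
    (hl' : l ≤ min m (n + c - m - 2)) (hnc : 2 * m + 2 ≤ n + c) :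
    (i ≤ l →
      (∑ k ∈ Finset.Icc (0 : ℤ) (c - m - 1),
        (-1 : ℤ) ^ k.toNat * (c - k) * izC (c - m - 1 + i) k *
          izC (c - m - 2 + i - k) (i - (n + 1)) * izC (l + c - m - 1 - k) l) = 0) ∧
    (l ≤ i - 1 →
      (∑ k ∈ Finset.Icc (0 : ℤ) (c - m - 1),
        (-1 : ℤ) ^ k.toNat * (c - k) * izC (c - m - 1 + i) k *
          izC (c - m - 2 + i - k) (i - (n + 1)) * izC (l + c - m - 1 - k) l)
        = (-1 : ℤ) ^ (n + c - m - 1 + l).toNat * (m + 1 - i) * izC (i - 1) l) := by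
  have hln : n ≤ l := le_trans (le_max_right 0 n) hl
  have hl0 : (0:ℤ) ≤ l := le_trans (le_max_left 0 n) hl
  have hi1 : 1 ≤ i := le_trans (le_max_left 1 (n+1)) hi
  have hin : n + 1 ≤ i := le_trans (le_max_right 1 (n+1)) hi
  have hlm : l ≤ m := le_trans hl' (min_le_left _ _)
  have hlK : l ≤ n + c - m - 2 := le_trans hl' (min_le_right _ _)
  obtain ⟨Kn, hK⟩ : ∃ Kn : ℕ, (c - m - 1 : ℤ) = Kn := ⟨(c-m-1).toNat, by omega⟩
  obtain ⟨iN, hiN⟩ : ∃ iN : ℕ, i = iN := ⟨i.toNat, by omega⟩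
  obtain ⟨lN, hlN⟩ : ∃ lN : ℕ, l = lN := ⟨l.toNat, by omega⟩
  obtain ⟨dN, hdN⟩ : ∃ dN : ℕ, i - n - 1 = dN := ⟨(i-n-1).toNat, by omega⟩
  obtain ⟨eN, heN⟩ : ∃ eN : ℕ, c + n - m - 1 = eN := ⟨(c+n-m-1).toNat, by omega⟩
  set M : ℕ := Kn + iN with hMdef
  have hMz : (M:ℤ) = c - m - 1 + i := by push_cast [hMdef]; omega
  have hK1 : 1 ≤ Kn := by omega
  have hiN1 : 1 ≤ iN := by omega
  have heM : (eN:ℤ) + dN + 1 = M := by rw [hMz]; omega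
  have hle : (lN:ℤ) + 1 ≤ eN := by omega
  -- Step A: convert to a range sum
  have hA : ∑ k ∈ Finset.Icc (0 : ℤ) (c - m - 1),
        (-1 : ℤ) ^ k.toNat * (c - k) * izC (c - m - 1 + i) k *
          izC (c - m - 2 + i - k) (i - (n + 1)) * izC (l + c - m - 1 - k) l
      = ∑ k ∈ Finset.range (Kn+1),
        (-1 : ℤ) ^ k * (c - k) * izC (M:ℤ) (k:ℤ) *
          izC ((M:ℤ) - 1 - k) (dN:ℤ) * izC ((lN:ℤ) + Kn - k) (lN:ℤ) := by
    rw [sum_Icc_toRange (c-m-1) (by omega)]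
    rw [show (c-m-1).toNat = Kn by omega]
    apply Finset.sum_congr rfl
    intro k _
    rw [show ((k:ℤ)).toNat = k from Int.toNat_natCast k]
    rw [show c - m - 1 + i = (M:ℤ) by omega]
    rw [show c - m - 2 + i - (k:ℤ) = (M:ℤ) - 1 - k by omega]
    rw [show i - (n+1) = (dN:ℤ) by omega]
    rw [show l + c - m - 1 - (k:ℤ) = (lN:ℤ) + Kn - k by omega]
    rw [show l = (lN:ℤ) from hlN]
  -- Step B: extend the range to M+1
  have hB : ∑ k ∈ Finset.range (Kn+1),
        (-1 : ℤ) ^ k * (c - k) * izC (M:ℤ) (k:ℤ) *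
          izC ((M:ℤ) - 1 - k) (dN:ℤ) * izC ((lN:ℤ) + Kn - k) (lN:ℤ)
      = ∑ k ∈ Finset.range (M+1),
        (-1 : ℤ) ^ k * (c - k) * izC (M:ℤ) (k:ℤ) *
          izC ((M:ℤ) - 1 - k) (dN:ℤ) * izC ((lN:ℤ) + Kn - k) (lN:ℤ) := by
    apply Finset.sum_subset (Finset.range_subset_range.2 (by omega))
    intro k hk hk2
    simp only [Finset.mem_range] at hk hk2
    rw [izC_of_lt (show (lN:ℤ) + Kn - k < (lN:ℤ) by omega)]
    ring
  -- Step C: split off the absorbed part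
  have hC : ∑ k ∈ Finset.range (M+1),
        (-1 : ℤ) ^ k * (c - k) * izC (M:ℤ) (k:ℤ) *
          izC ((M:ℤ) - 1 - k) (dN:ℤ) * izC ((lN:ℤ) + Kn - k) (lN:ℤ)
      = (M:ℤ) * (∑ k ∈ Finset.range (M+1),
          (-1 : ℤ) ^ k * izC ((M:ℤ)-1) (k:ℤ) *
            izC ((M:ℤ) - 1 - k) (dN:ℤ) * izC ((lN:ℤ) + Kn - k) (lN:ℤ))
        - (i - m - 1) * (∑ k ∈ Finset.range (M+1),
          (-1 : ℤ) ^ k * izC (M:ℤ) (k:ℤ) *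
            izC ((M:ℤ) - 1 - k) (dN:ℤ) * izC ((lN:ℤ) + Kn - k) (lN:ℤ)) := by
    rw [Finset.mul_sum, Finset.mul_sum, ← Finset.sum_sub_distrib]
    apply Finset.sum_congr rfl
    intro k _
    have habs := izC_absorb (N := (M:ℤ)) (k := (k:ℤ)) (by omega)
    have hc2 : c - (k:ℤ) = ((M:ℤ) - k) - (i - m - 1) := by omega
    rw [hc2]
    linear_combination ((-1:ℤ)^k * izC ((M:ℤ)-1-k) (dN:ℤ) * izC ((lN:ℤ)+Kn-k) (lN:ℤ)) * habs
  -- Step D: the first sum vanishes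
  have hD : (∑ k ∈ Finset.range (M+1),
          (-1 : ℤ) ^ k * izC ((M:ℤ)-1) (k:ℤ) *
            izC ((M:ℤ) - 1 - k) (dN:ℤ) * izC ((lN:ℤ) + Kn - k) (lN:ℤ)) = 0 := by
    have ht1 : ∀ k ∈ Finset.range (M+1),
        (-1 : ℤ) ^ k * izC ((M:ℤ)-1) (k:ℤ) *
            izC ((M:ℤ) - 1 - k) (dN:ℤ) * izC ((lN:ℤ) + Kn - k) (lN:ℤ)
        = izC ((M:ℤ)-1) (dN:ℤ) *
            ((-1 : ℤ) ^ k * izC (eN:ℤ) (k:ℤ) * izC ((lN:ℤ) + Kn - k) (lN:ℤ)) := by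
      intro k _
      have hsw := izC_swap ((M:ℤ)-1) (k:ℤ) (dN:ℤ)
      rw [show (M:ℤ)-1-(dN:ℤ) = (eN:ℤ) by omega] at hsw
      linear_combination ((-1:ℤ)^k * izC ((lN:ℤ)+Kn-k) (lN:ℤ)) * hsw
    rw [Finset.sum_congr rfl ht1, ← Finset.mul_sum]
    have hshr := shrink_sum M eN (by omega) (fun k => izC ((lN:ℤ) + Kn - k) (lN:ℤ))
    rw [hshr]
    have hGm : ∑ b ∈ Finset.range (eN+1),
        (-1:ℤ)^b * izC (eN:ℤ) (b:ℤ) * izC ((lN:ℤ) + Kn - b) (lN:ℤ)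
        = Gm eN ((lN:ℤ)+Kn) (lN:ℤ) := rfl
    rw [hGm, Gm_Ib eN ((lN:ℤ)+Kn) (lN:ℤ) (by omega) (by omega)]
    rw [izC_of_lt (show (eN:ℤ) - lN - 1 < (lN:ℤ) + Kn - lN by omega)]
    ring
  -- Step E: decouple the second sum
  have hdec := decouple M (fun a => izC ((lN:ℤ) + Kn - a) (lN:ℤ))
      (fun b => izC ((M:ℤ) - 1 - b) (dN:ℤ))
  have hreord : ∀ k ∈ Finset.range (M+1),
      (-1 : ℤ) ^ k * izC (M:ℤ) (k:ℤ) *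
            izC ((M:ℤ) - 1 - k) (dN:ℤ) * izC ((lN:ℤ) + Kn - k) (lN:ℤ)
      = (-1 : ℤ) ^ k * izC (M:ℤ) (k:ℤ) *
            izC ((lN:ℤ) + Kn - k) (lN:ℤ) * izC ((M:ℤ) - 1 - k) (dN:ℤ) := by
    intro k _; ring
  have hX : ∀ r, r ≤ M →
      (∑ a ∈ Finset.range (M+1),
        (-1:ℤ)^(a-r) * izC ((M:ℤ)-(r:ℤ)) ((a:ℤ)-(r:ℤ)) * izC ((lN:ℤ) + Kn - a) (lN:ℤ))
      = Gm (M-r) ((lN:ℤ) + Kn - r) (lN:ℤ) := by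
    intro r hr
    rw [shift_sum M r hr (fun a => izC ((lN:ℤ) + Kn - a) (lN:ℤ))]
    unfold Gm
    apply Finset.sum_congr rfl
    intro s _
    rw [show ((M-r:ℕ):ℤ) = (M:ℤ)-(r:ℤ) by omega]
    rw [show (lN:ℤ) + Kn - ((r+s:ℕ):ℤ) = ((lN:ℤ) + Kn - r) - s by push_cast; ring]
  have hY : ∀ r, r ≤ M →
      (∑ b ∈ Finset.range (M+1),
        (-1:ℤ)^b * izC (r:ℤ) (b:ℤ) * izC ((M:ℤ) - 1 - b) (dN:ℤ))
      = Gm r ((M:ℤ)-1) (dN:ℤ) := by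
    intro r hr
    rw [shrink_sum M r hr (fun b => izC ((M:ℤ) - 1 - b) (dN:ℤ))]
    rfl
  have hE : (∑ k ∈ Finset.range (M+1),
        (-1 : ℤ) ^ k * izC (M:ℤ) (k:ℤ) *
          izC ((M:ℤ) - 1 - k) (dN:ℤ) * izC ((lN:ℤ) + Kn - k) (lN:ℤ))
      = ∑ r ∈ Finset.range (M+1), izC (M:ℤ) (r:ℤ) *
          Gm (M-r) ((lN:ℤ) + Kn - r) (lN:ℤ) * Gm r ((M:ℤ)-1) (dN:ℤ) := by
    rw [Finset.sum_congr rfl hreord, hdec]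
    apply Finset.sum_congr rfl
    intro r hr
    simp only [Finset.mem_range] at hr
    rw [hX r (by omega), hY r (by omega)]
  -- the grand total so far
  have htot : ∑ k ∈ Finset.Icc (0 : ℤ) (c - m - 1),
        (-1 : ℤ) ^ k.toNat * (c - k) * izC (c - m - 1 + i) k *
          izC (c - m - 2 + i - k) (i - (n + 1)) * izC (l + c - m - 1 - k) l
      = -(i - m - 1) * (∑ r ∈ Finset.range (M+1), izC (M:ℤ) (r:ℤ) *
          Gm (M-r) ((lN:ℤ) + Kn - r) (lN:ℤ) * Gm r ((M:ℤ)-1) (dN:ℤ)) := by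
    rw [hA, hB, hC, hD, hE]; ring
  constructor
  · -- Part 1 : i ≤ l
    intro hil
    rw [htot]
    have : (∑ r ∈ Finset.range (M+1), izC (M:ℤ) (r:ℤ) *
          Gm (M-r) ((lN:ℤ) + Kn - r) (lN:ℤ) * Gm r ((M:ℤ)-1) (dN:ℤ)) = 0 := by
      apply Finset.sum_eq_zero
      intro r hr
      simp only [Finset.mem_range] at hr
      by_cases hrd : r ≤ dN
      · rw [Gm_Ib (M-r) ((lN:ℤ) + Kn - r) (lN:ℤ) (by omega) (by push_cast; omega)]
        rw [izC_of_lt (show ((M-r:ℕ):ℤ) - lN - 1 < (lN:ℤ) + Kn - r - lN by push_cast; omega)]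
        ring
      · by_cases hrM : r = M
        · subst hrM
          rw [show M - M = 0 by omega, Gm0]
          rw [izC_of_lt (show (lN:ℤ) + Kn - M < (lN:ℤ) by push_cast; omega)]
          ring
        · rw [Gm_Ib r ((M:ℤ)-1) (dN:ℤ) (by omega) (by omega)]
          rw [izC_of_lt (show (r:ℤ) - dN - 1 < (M:ℤ) - 1 - dN by omega)]
          ring
    rw [this]; ring
  · -- Part 2 : l ≤ i - 1
    intro hli
    obtain ⟨gN, hgN⟩ : ∃ gN : ℕ, i - l - 1 = gN := ⟨(i-l-1).toNat, by omega⟩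
    rw [htot]
    -- round 2 preparation : termwise rewrite
    have hterm2 : ∀ r ∈ Finset.range (M+1), izC (M:ℤ) (r:ℤ) *
          Gm (M-r) ((lN:ℤ) + Kn - r) (lN:ℤ) * Gm r ((M:ℤ)-1) (dN:ℤ)
        = (-1:ℤ)^Kn * ((-1:ℤ)^r * izC (M:ℤ) (r:ℤ) *
            izC ((M:ℤ) - 1 - r) (eN:ℤ) * izC ((M:ℤ) - lN - 1 - r) (gN:ℤ)) := by
      intro r hr
      simp only [Finset.mem_range] at hr
      by_cases hrd : r ≤ dN
      · -- X-branch via Ib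
        rw [Gm_Ib (M-r) ((lN:ℤ) + Kn - r) (lN:ℤ) (by omega) (by push_cast; omega)]
        rw [show ((lN:ℤ) + Kn - r - lN).toNat = Kn - r by omega]
        rw [show ((M-r:ℕ):ℤ) - lN - 1 = (M:ℤ) - lN - 1 - r by push_cast; omega]
        rw [show (lN:ℤ) + Kn - r - lN = (Kn:ℤ) - r by ring]
        rw [Gm_Ia r ((M:ℤ)-1) (dN:ℤ) (by omega)]
        rw [izC_symm (a := (M:ℤ)-1-r) (b := (dN:ℤ)-r) (by omega) (by omega)]
        rw [show (M:ℤ)-1-r - ((dN:ℤ)-r) = (eN:ℤ) by omega]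
        by_cases hrK : r ≤ Kn
        · rw [negpow_sub hrK]
          rw [izC_symm (a := (M:ℤ)-lN-1-r) (b := (Kn:ℤ)-r) (by omega) (by omega)]
          rw [show (M:ℤ)-lN-1-r - ((Kn:ℤ)-r) = (gN:ℤ) by push_cast; omega]
          ring
        · rw [izC_of_neg (show (Kn:ℤ)-r < 0 by omega)]
          rw [izC_of_lt (show (M:ℤ)-lN-1-r < (gN:ℤ) by push_cast; omega)]
          ring
      · by_cases hrM : r = M
        · subst hrM
          rw [show M - M = 0 by omega, Gm0]
          rw [izC_of_lt (show (lN:ℤ) + Kn - M < (lN:ℤ) by push_cast; omega)]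
          rw [izC_of_lt (show (M:ℤ) - 1 - M < (eN:ℤ) by push_cast; omega)]
          ring
        · rw [Gm_Ib r ((M:ℤ)-1) (dN:ℤ) (by omega) (by omega)]
          rw [izC_of_lt (show (r:ℤ) - dN - 1 < (M:ℤ) - 1 - dN by omega)]
          rw [izC_of_lt (show (M:ℤ) - 1 - r < (eN:ℤ) by omega)]
          ring
    rw [Finset.sum_congr rfl hterm2, ← Finset.mul_sum]
    -- round 2 decoupling
    have hdec2 := decouple M (fun a => izC ((M:ℤ) - 1 - a) (eN:ℤ))
        (fun b => izC ((M:ℤ) - lN - 1 - b) (gN:ℤ))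
    have hX2 : ∀ r, r ≤ M →
        (∑ a ∈ Finset.range (M+1),
          (-1:ℤ)^(a-r) * izC ((M:ℤ)-(r:ℤ)) ((a:ℤ)-(r:ℤ)) * izC ((M:ℤ) - 1 - a) (eN:ℤ))
        = Gm (M-r) ((M:ℤ) - 1 - r) (eN:ℤ) := by
      intro r hr
      rw [shift_sum M r hr (fun a => izC ((M:ℤ) - 1 - a) (eN:ℤ))]
      unfold Gm
      apply Finset.sum_congr rfl
      intro s _
      rw [show ((M-r:ℕ):ℤ) = (M:ℤ)-(r:ℤ) by omega]
      rw [show (M:ℤ) - 1 - ((r+s:ℕ):ℤ) = ((M:ℤ) - 1 - r) - s by push_cast; ring]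
    have hY2 : ∀ r, r ≤ M →
        (∑ b ∈ Finset.range (M+1),
          (-1:ℤ)^b * izC (r:ℤ) (b:ℤ) * izC ((M:ℤ) - lN - 1 - b) (gN:ℤ))
        = Gm r ((M:ℤ) - lN - 1) (gN:ℤ) := by
      intro r hr
      rw [shrink_sum M r hr (fun b => izC ((M:ℤ) - lN - 1 - b) (gN:ℤ))]
      rfl
    rw [hdec2]
    have hterm3 : ∀ r ∈ Finset.range (M+1), izC (M:ℤ) (r:ℤ) *
        (∑ a ∈ Finset.range (M+1),
          (-1:ℤ)^(a-r) * izC ((M:ℤ)-(r:ℤ)) ((a:ℤ)-(r:ℤ)) * izC ((M:ℤ) - 1 - a) (eN:ℤ)) *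
        (∑ b ∈ Finset.range (M+1),
          (-1:ℤ)^b * izC (r:ℤ) (b:ℤ) * izC ((M:ℤ) - lN - 1 - b) (gN:ℤ))
        = (-1:ℤ)^dN * ((-1:ℤ)^r * izC (M:ℤ) (r:ℤ) * izC ((M:ℤ) - lN - 1 - r) (Kn:ℤ)) := by
      intro r hr
      simp only [Finset.mem_range] at hr
      rw [hX2 r (by omega), hY2 r (by omega)]
      by_cases hrd : r ≤ dN
      · rw [Gm_Ib (M-r) ((M:ℤ) - 1 - r) (eN:ℤ) (by omega) (by push_cast; omega)]
        rw [show ((M:ℤ) - 1 - r - eN).toNat = dN - r by omega]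
        rw [show ((M-r:ℕ):ℤ) - eN - 1 = (dN:ℤ) - r by push_cast; omega]
        rw [show (M:ℤ) - 1 - r - eN = (dN:ℤ) - r by omega]
        rw [izC_self (show (0:ℤ) ≤ (dN:ℤ) - r by omega), negpow_sub hrd]
        by_cases hrg : (r:ℤ) ≤ (gN:ℤ)
        · rw [Gm_Ia r ((M:ℤ) - lN - 1) (gN:ℤ) (by omega)]
          rw [izC_symm (a := (M:ℤ)-lN-1-r) (b := (gN:ℤ)-r) (by omega) (by push_cast; omega)]
          rw [show (M:ℤ)-lN-1-r - ((gN:ℤ)-r) = (Kn:ℤ) by push_cast; omega]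
          ring
        · rw [Gm_Ib r ((M:ℤ) - lN - 1) (gN:ℤ) (by omega) (by omega)]
          rw [izC_of_lt (show (r:ℤ) - gN - 1 < (M:ℤ) - lN - 1 - gN by push_cast; omega)]
          rw [izC_of_lt (show (M:ℤ) - lN - 1 - r < (Kn:ℤ) by push_cast; omega)]
          ring
      · rw [Gm_Ia (M-r) ((M:ℤ) - 1 - r) (eN:ℤ) (by push_cast; omega)]
        rw [izC_of_lt (show (M:ℤ) - 1 - r - (M-r:ℕ) < (eN:ℤ) - (M-r:ℕ) by push_cast; omega)]
        rw [izC_of_lt (show (M:ℤ) - lN - 1 - r < (Kn:ℤ) by push_cast; omega)]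
        ring
    rw [Finset.sum_congr rfl hterm3, ← Finset.mul_sum]
    have hGm3 : ∑ r ∈ Finset.range (M+1),
        (-1:ℤ)^r * izC (M:ℤ) (r:ℤ) * izC ((M:ℤ) - lN - 1 - r) (Kn:ℤ)
        = Gm M ((M:ℤ) - lN - 1) (Kn:ℤ) := rfl
    rw [hGm3, Gm_Ib M ((M:ℤ) - lN - 1) (Kn:ℤ) (by omega) (by push_cast; omega)]
    rw [show ((M:ℤ) - lN - 1 - Kn).toNat = gN by omega]
    rw [show (M:ℤ) - Kn - 1 = (iN:ℤ) - 1 by push_cast; omega]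
    rw [show (M:ℤ) - lN - 1 - Kn = (gN:ℤ) by push_cast; omega]
    rw [izC_symm (a := (iN:ℤ)-1) (b := (gN:ℤ)) (by omega) (by omega)]
    rw [show (iN:ℤ) - 1 - gN = (lN:ℤ) by omega]
    rw [show (iN:ℤ) - 1 = i - 1 by omega, show (lN:ℤ) = l by omega]
    have hpar : (-1:ℤ)^((n + c - m - 1 + l).toNat) = (-1:ℤ)^Kn * (-1:ℤ)^dN * (-1:ℤ)^gN := by
      rw [← pow_add, ← pow_add]
      apply negpow_congr
      omega
    rw [hpar]
    ring
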